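/- arXiv:1008.1661 — 2 statements merged into one kernel-verified Lean document; each statement's English description precedes it below -/
import Mathlib

section
/- Union upper bound: let L₁ and L₂ be suffix-free regular languages over an alphabet Σ with NSC(L₁) = m and NSC(L₂) = n, where m, n ≥ 2. Then NSC(L₁ ∪ L₂) ≤ m + n − 1, i.e., there is an NFA with at most m + n − 1 states accepting L₁ ∪ L₂. -/
open Computability

/-- A nondeterministic finite automaton with a single start state and
no ε-transitions. -/
structure SNFA (α : Type) (σ : Type) where
  step : σ → α → Set σ
  start : σ
  accept : Set σ

namespace SNFA

variable {α σ : Type}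

/-- The set of states reachable from some state in `S` by one transition on `a`. -/
def stepSet (M : SNFA α σ) (S : Set σ) (a : α) : Set σ :=
  ⋃ s ∈ S, M.step s a

/-- The set of states reachable from the set `S` of states by reading the word `w`. -/
def evalFrom (M : SNFA α σ) (S : Set σ) (w : List α) : Set σ :=
  w.foldl M.stepSet S

/-- The language accepted by `M`: all words spelled out by a path
from the start state to an accepting state. -/
def accepts (M : SNFA α σ) : Language α :=
  {w | ∃ q ∈ M.accept, q ∈ M.evalFrom {M.start} w}

end SNFA

/-- A language is suffix-free if no word of the language is a proper suffix
of another word of the language. -/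
def SuffixFree {α : Type} (L : Language α) : Prop :=
  ∀ u v : List α, u ∈ L → v ∈ L → u <:+ v → u = v

/-- `NSCle L k`: there is an NFA with at most `k` states accepting `L`
(so the nondeterministic state complexity of `L` is at most `k`). -/
def NSCle {α : Type} (L : Language α) (k : ℕ) : Prop :=
  ∃ (σ : Type) (x : Fintype σ) (M : SNFA α σ), M.accepts = L ∧ @Fintype.card σ x ≤ k

/-- `NSCge L k`: every NFA accepting `L` has at least `k` states
(so the nondeterministic state complexity of `L` is at least `k`). -/
def NSCge {α : Type} (L : Language α) (k : ℕ) : Prop :=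
  ∀ (σ : Type) [Fintype σ] (M : SNFA α σ), M.accepts = L → k ≤ Fintype.card σ

/-- `NSCeq L m`: the nondeterministic state complexity of `L` is exactly `m`:
some NFA with `m` states accepts `L` and every NFA accepting `L` has at least
`m` states. -/
def NSCeq {α : Type} (L : Language α) (m : ℕ) : Prop :=
  NSCle L m ∧ NSCge L m

namespace SNFA

variable {α σ σ₁ σ₂ : Type}

lemma stepSet_mono {M : SNFA α σ} {S T : Set σ} (h : S ⊆ T) (a : α) :
    M.stepSet S a ⊆ M.stepSet T a := by
  intro x hx
  simp only [stepSet, Set.mem_iUnion] at hx ⊢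
  obtain ⟨s, hs, hx⟩ := hx
  exact ⟨s, h hs, hx⟩

lemma evalFrom_mono {M : SNFA α σ} {S T : Set σ} (h : S ⊆ T) (w : List α) :
    M.evalFrom S w ⊆ M.evalFrom T w := by
  induction w generalizing S T with
  | nil => exact h
  | cons a w ih => exact ih (stepSet_mono h a)

lemma evalFrom_nil (M : SNFA α σ) (S : Set σ) : M.evalFrom S [] = S := rfl

lemma evalFrom_cons (M : SNFA α σ) (S : Set σ) (a : α) (w : List α) :
    M.evalFrom S (a :: w) = M.evalFrom (M.stepSet S a) w := rfl

lemma evalFrom_append_singleton (M : SNFA α σ) (S : Set σ) (w : List α) (a : α) :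
    M.evalFrom S (w ++ [a]) = M.stepSet (M.evalFrom S w) a := by
  simp [evalFrom, List.foldl_append]

lemma stepSet_singleton (M : SNFA α σ) (s : σ) (a : α) :
    M.stepSet {s} a = M.step s a := by
  simp [stepSet]

lemma stepSet_empty (M : SNFA α σ) (a : α) : M.stepSet ∅ a = ∅ := by
  simp [stepSet]

lemma evalFrom_empty (M : SNFA α σ) (w : List α) : M.evalFrom ∅ w = ∅ := by
  induction w with
  | nil => rfl
  | cons a w ih => rw [evalFrom_cons, stepSet_empty]; exact ih

/-- `M` with all transitions into the start state removed. -/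
def prune (M : SNFA α σ) : SNFA α σ where
  step p a := M.step p a \ {M.start}
  start := M.start
  accept := M.accept

lemma prune_nonreturning (M : SNFA α σ) (p : σ) (a : α) :
    M.start ∉ (M.prune).step p a := fun h => h.2 rfl

lemma prune_stepSet_subset (M : SNFA α σ) (S : Set σ) (a : α) :
    (M.prune).stepSet S a ⊆ M.stepSet S a := by
  intro x hx
  simp only [stepSet, Set.mem_iUnion] at hx ⊢
  obtain ⟨s, hs, hx⟩ := hx
  exact ⟨s, hs, hx.1⟩

lemma prune_evalFrom_subset (M : SNFA α σ) (S : Set σ) (w : List α) :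
    (M.prune).evalFrom S w ⊆ M.evalFrom S w := by
  induction w generalizing S with
  | nil => exact le_rfl
  | cons a w ih =>
      rw [evalFrom_cons, evalFrom_cons]
      exact (ih _).trans (evalFrom_mono (prune_stepSet_subset M S a) w)

lemma evalFrom_start_subset_suffix (M : SNFA α σ) (w : List α) :
    M.evalFrom {M.start} w ⊆
      ⋃ v ∈ {v : List α | v <:+ w}, (M.prune).evalFrom {M.start} v := by
  induction w using List.reverseRecOn with
  | nil =>
      intro x hx
      simp only [Set.mem_iUnion]
      exact ⟨[], List.nil_suffix, hx⟩
  | append_singleton w a ih =>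
      rw [evalFrom_append_singleton]
      intro x hx
      simp only [stepSet, Set.mem_iUnion] at hx
      obtain ⟨s, hs, hx⟩ := hx
      have hs' := ih hs
      simp only [Set.mem_iUnion] at hs' ⊢
      obtain ⟨v, hv, hsv⟩ := hs'
      by_cases hxs : x = M.start
      · exact ⟨[], List.nil_suffix, by simp [evalFrom_nil, hxs]⟩
      · refine ⟨v ++ [a], ?_, ?_⟩
        · obtain ⟨t, rfl⟩ := hv
          exact ⟨t, by simp⟩
        · rw [evalFrom_append_singleton]
          simp only [stepSet, Set.mem_iUnion]
          exact ⟨s, hsv, ⟨hx, hxs⟩⟩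

lemma prune_accepts (M : SNFA α σ) (h : SuffixFree M.accepts) :
    (M.prune).accepts = M.accepts := by
  ext w
  constructor
  · rintro ⟨q, hq, hq'⟩
    exact ⟨q, hq, prune_evalFrom_subset M _ w hq'⟩
  · rintro ⟨q, hq, hq'⟩
    have h1 := evalFrom_start_subset_suffix M w hq'
    simp only [Set.mem_iUnion] at h1
    obtain ⟨v, hv, hqv⟩ := h1
    have hvL : v ∈ M.accepts := ⟨q, hq, prune_evalFrom_subset M _ v hqv⟩
    have hveq : v = w := h v w hvL ⟨q, hq, hq'⟩ hv
    subst hveq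
    exact ⟨q, hq, hqv⟩

lemma notMem_evalFrom {M : SNFA α σ} {s : σ}
    (h : ∀ p a, s ∉ M.step p a) {S : Set σ} (hS : s ∉ S) (w : List α) :
    s ∉ M.evalFrom S w := by
  induction w generalizing S with
  | nil => exact hS
  | cons a w ih =>
      rw [evalFrom_cons]
      refine ih ?_
      intro hmem
      simp only [stepSet, Set.mem_iUnion] at hmem
      obtain ⟨p, _, hp⟩ := hmem
      exact h p a hp

open Classical in
/-- Merge the starts of two NFAs. -/
def merge (M₁ : SNFA α σ₁) (M₂ : SNFA α σ₂) :
    SNFA α (σ₁ ⊕ {q : σ₂ // q ≠ M₂.start}) where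
  step x a :=
    match x with
    | .inl p => Sum.inl '' M₁.step p a ∪
        (if p = M₁.start then Sum.inr '' (Subtype.val ⁻¹' M₂.step M₂.start a) else ∅)
    | .inr q => Sum.inr '' (Subtype.val ⁻¹' M₂.step q.val a)
  start := .inl M₁.start
  accept := Sum.inl '' M₁.accept ∪ Sum.inr '' (Subtype.val ⁻¹' M₂.accept)

/-- Joint encoding of a pair of state sets inside the merged automaton. -/
def psi (M₂ : SNFA α σ₂) (S₁ : Set σ₁) (S₂ : Set σ₂) :
    Set (σ₁ ⊕ {q : σ₂ // q ≠ M₂.start}) :=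
  Sum.inl '' S₁ ∪ Sum.inr '' (Subtype.val ⁻¹' S₂)

lemma merge_stepSet (M₁ : SNFA α σ₁) (M₂ : SNFA α σ₂)
    {S₁ : Set σ₁} {S₂ : Set σ₂} (h₁ : M₁.start ∉ S₁) (h₂ : M₂.start ∉ S₂) (a : α) :
    (merge M₁ M₂).stepSet (psi M₂ S₁ S₂) a
      = psi M₂ (M₁.stepSet S₁ a) (M₂.stepSet S₂ a) := by
  ext x
  simp only [stepSet, psi, Set.mem_iUnion, Set.mem_union, Set.mem_image,
    Set.mem_preimage]
  constructor
  · rintro ⟨s, hs, hx⟩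
    rcases hs with ⟨p, hp, rfl⟩ | ⟨q, hq, rfl⟩
    · have hps : p ≠ M₁.start := fun h => h₁ (h ▸ hp)
      simp only [merge, if_neg hps, Set.union_empty, Set.mem_image] at hx
      obtain ⟨y, hy, rfl⟩ := hx
      exact Or.inl ⟨y, ⟨p, hp, hy⟩, rfl⟩
    · simp only [merge, Set.mem_image, Set.mem_preimage] at hx
      obtain ⟨y, hy, rfl⟩ := hx
      exact Or.inr ⟨y, ⟨q.val, hq, hy⟩, rfl⟩
  · rintro (⟨y, ⟨p, hp, hy⟩, rfl⟩ | ⟨y, ⟨q, hq, hy⟩, rfl⟩)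
    · refine ⟨Sum.inl p, Or.inl ⟨p, hp, rfl⟩, ?_⟩
      have hps : p ≠ M₁.start := fun h => h₁ (h ▸ hp)
      simp only [merge, if_neg hps, Set.union_empty, Set.mem_image]
      exact ⟨y, hy, rfl⟩
    · have hqs : q ≠ M₂.start := fun h => h₂ (h ▸ hq)
      refine ⟨Sum.inr ⟨q, hqs⟩, Or.inr ⟨⟨q, hqs⟩, hq, rfl⟩, ?_⟩
      simp only [merge, Set.mem_image, Set.mem_preimage]
      exact ⟨y, hy, rfl⟩

lemma merge_evalFrom (M₁ : SNFA α σ₁) (M₂ : SNFA α σ₂)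
    (nr₁ : ∀ p a, M₁.start ∉ M₁.step p a) (nr₂ : ∀ p a, M₂.start ∉ M₂.step p a)
    (w : List α) :
    ∀ {S₁ : Set σ₁} {S₂ : Set σ₂}, M₁.start ∉ S₁ → M₂.start ∉ S₂ →
    (merge M₁ M₂).evalFrom (psi M₂ S₁ S₂) w
      = psi M₂ (M₁.evalFrom S₁ w) (M₂.evalFrom S₂ w) := by
  induction w with
  | nil => intro S₁ S₂ _ _; rfl
  | cons a w ih =>
      intro S₁ S₂ h₁ h₂
      rw [evalFrom_cons, merge_stepSet M₁ M₂ h₁ h₂ a, evalFrom_cons, evalFrom_cons]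
      refine ih ?_ ?_
      · intro hmem
        simp only [stepSet, Set.mem_iUnion] at hmem
        obtain ⟨p, _, hp⟩ := hmem
        exact nr₁ p a hp
      · intro hmem
        simp only [stepSet, Set.mem_iUnion] at hmem
        obtain ⟨p, _, hp⟩ := hmem
        exact nr₂ p a hp

lemma merge_accepts (M₁ : SNFA α σ₁) (M₂ : SNFA α σ₂)
    (nr₁ : ∀ p a, M₁.start ∉ M₁.step p a) (nr₂ : ∀ p a, M₂.start ∉ M₂.step p a)
    (ha₁ : M₁.start ∉ M₁.accept) (ha₂ : M₂.start ∉ M₂.accept) :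
    (merge M₁ M₂).accepts = M₁.accepts ⊔ M₂.accepts := by
  ext w
  show _ ↔ w ∈ M₁.accepts ∨ w ∈ M₂.accepts
  cases w with
  | nil =>
      constructor
      · rintro ⟨q, hq, hq'⟩
        rw [evalFrom_nil, Set.mem_singleton_iff] at hq'
        subst hq'
        rcases hq with ⟨p, hp, hps⟩ | ⟨p, hp, hps⟩
        · rw [show (merge M₁ M₂).start = Sum.inl M₁.start from rfl] at hps
          cases Sum.inl_injective hps
          exact absurd hp ha₁
        · exact absurd hps (by simp [merge])
      · rintro (⟨q, hq, hq'⟩ | ⟨q, hq, hq'⟩)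
        · rw [evalFrom_nil, Set.mem_singleton_iff] at hq'
          exact absurd (hq' ▸ hq) ha₁
        · rw [evalFrom_nil, Set.mem_singleton_iff] at hq'
          exact absurd (hq' ▸ hq) ha₂
  | cons a v =>
      have hstep : (merge M₁ M₂).stepSet {(merge M₁ M₂).start} a
          = psi M₂ (M₁.step M₁.start a) (M₂.step M₂.start a) := by
        rw [stepSet_singleton]
        show Sum.inl '' M₁.step M₁.start a ∪ _ = _
        rw [if_pos rfl]
        rfl
      have heval : (merge M₁ M₂).evalFrom {(merge M₁ M₂).start} (a :: v)
          = psi M₂ (M₁.evalFrom {M₁.start} (a :: v)) (M₂.evalFrom {M₂.start} (a :: v)) := by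
        rw [evalFrom_cons, hstep,
          merge_evalFrom M₁ M₂ nr₁ nr₂ v (nr₁ _ _) (nr₂ _ _),
          evalFrom_cons, evalFrom_cons, stepSet_singleton, stepSet_singleton]
      constructor
      · rintro ⟨q, hq, hq'⟩
        rw [heval] at hq'
        rcases hq' with ⟨p, hp, rfl⟩ | ⟨p, hp, rfl⟩
        · rcases hq with ⟨r, hr, hrs⟩ | ⟨r, hr, hrs⟩
          · cases Sum.inl_injective hrs
            exact Or.inl ⟨p, hr, hp⟩
          · exact absurd hrs (by simp)
        · rcases hq with ⟨r, hr, hrs⟩ | ⟨r, hr, hrs⟩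
          · exact absurd hrs (by simp)
          · cases Sum.inr_injective hrs
            exact Or.inr ⟨p.val, hr, hp⟩
      · rintro (⟨q, hq, hq'⟩ | ⟨q, hq, hq'⟩)
        · exact ⟨Sum.inl q, Or.inl ⟨q, hq, rfl⟩, by rw [heval]; exact Or.inl ⟨q, hq', rfl⟩⟩
        · have hqs : q ≠ M₂.start := by
            intro h; subst h
            rw [evalFrom_cons, stepSet_singleton] at hq'
            exact notMem_evalFrom nr₂ (nr₂ _ _) v hq'
          exact ⟨Sum.inr ⟨q, hqs⟩, Or.inr ⟨⟨q, hqs⟩, hq, rfl⟩,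
            by rw [heval]; exact Or.inr ⟨⟨q, hqs⟩, hq', rfl⟩⟩

/-- A one-state NFA accepting exactly the empty word. -/
def unitNFA (α : Type) : SNFA α Unit where
  step _ _ := ∅
  start := ()
  accept := Set.univ

lemma unitNFA_accepts {L : Language α} (hnil : [] ∈ L)
    (hsf : SuffixFree L) : (unitNFA α).accepts = L := by
  ext w
  cases w with
  | nil =>
      constructor
      · intro _; exact hnil
      · intro _; exact ⟨(), Set.mem_univ _, rfl⟩
  | cons a v =>
      constructor
      · rintro ⟨q, _, hq'⟩
        rw [evalFrom_cons, stepSet_singleton] at hq'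
        rw [show (unitNFA α).step () a = ∅ from rfl, evalFrom_empty] at hq'
        exact absurd hq' (Set.notMem_empty q)
      · intro hw
        exact absurd (hsf [] (a :: v) hnil hw ⟨a :: v, by simp⟩) (by simp)

lemma nil_notMem {L : Language α} {m : ℕ} (hsf : SuffixFree L)
    (hge : NSCge L m) (hm : 2 ≤ m) : [] ∉ L := by
  intro hnil
  have := hge Unit (unitNFA α) (unitNFA_accepts hnil hsf)
  simp [Fintype.card_unit] at this
  omega

end SNFA

/-- **Union, upper bound.** If `L₁` and `L₂` are suffix-free regular languages
with nondeterministic state complexities `m, n ≥ 2`, then some NFA with at most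
`m + n - 1` states accepts `L₁ ∪ L₂`. -/
theorem union_upper {α : Type} (L₁ L₂ : Language α) (m n : ℕ)
    (hsf₁ : SuffixFree L₁) (hsf₂ : SuffixFree L₂)
    (hm : NSCeq L₁ m) (hn : NSCeq L₂ n) (hm2 : 2 ≤ m) (hn2 : 2 ≤ n) :
    NSCle (L₁ ⊔ L₂) (m + n - 1) := by
  classical
  obtain ⟨σ₁, x₁, M₁, hM₁, hc₁⟩ := hm.1
  obtain ⟨σ₂, x₂, M₂, hM₂, hc₂⟩ := hn.1
  haveI := x₁; haveI := x₂
  replace hc₁ : Fintype.card σ₁ ≤ m :=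
    le_trans (le_of_eq (@Fintype.card_congr σ₁ σ₁ _ x₁ (Equiv.refl σ₁))) hc₁
  replace hc₂ : Fintype.card σ₂ ≤ n :=
    le_trans (le_of_eq (@Fintype.card_congr σ₂ σ₂ _ x₂ (Equiv.refl σ₂))) hc₂
  -- the languages do not contain the empty word
  have hnil₁ : [] ∉ L₁ := SNFA.nil_notMem hsf₁ hm.2 hm2
  have hnil₂ : [] ∉ L₂ := SNFA.nil_notMem hsf₂ hn.2 hn2
  -- pruned automata
  set P₁ := M₁.prune with hP₁
  set P₂ := M₂.prune with hP₂
  have hsfM₁ : SuffixFree M₁.accepts := by rw [hM₁]; exact hsf₁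
  have hsfM₂ : SuffixFree M₂.accepts := by rw [hM₂]; exact hsf₂
  have hPacc₁ : P₁.accepts = L₁ := by
    rw [hP₁, SNFA.prune_accepts M₁ hsfM₁, hM₁]
  have hPacc₂ : P₂.accepts = L₂ := by
    rw [hP₂, SNFA.prune_accepts M₂ hsfM₂, hM₂]
  have nr₁ : ∀ p a, P₁.start ∉ P₁.step p a := M₁.prune_nonreturning
  have nr₂ : ∀ p a, P₂.start ∉ P₂.step p a := M₂.prune_nonreturning
  have ha₁ : P₁.start ∉ P₁.accept := by
    intro h
    exact hnil₁ (hPacc₁ ▸ ⟨P₁.start, h, rfl⟩)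
  have ha₂ : P₂.start ∉ P₂.accept := by
    intro h
    exact hnil₂ (hPacc₂ ▸ ⟨P₂.start, h, rfl⟩)
  refine ⟨σ₁ ⊕ {q : σ₂ // q ≠ P₂.start}, inferInstance, SNFA.merge P₁ P₂, ?_, ?_⟩
  · rw [SNFA.merge_accepts P₁ P₂ nr₁ nr₂ ha₁ ha₂, hPacc₁, hPacc₂]
  · have hcard : Fintype.card (σ₁ ⊕ {q : σ₂ // q ≠ P₂.start})
        = Fintype.card σ₁ + Fintype.card {q : σ₂ // q ≠ P₂.start} :=
      Fintype.card_sum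
    have hsub : Fintype.card {q : σ₂ // q ≠ P₂.start} = Fintype.card σ₂ - 1 := by
      have h2 := Fintype.card_subtype_compl (fun q : σ₂ => q = P₂.start)
      rw [Fintype.card_subtype_eq] at h2
      refine Eq.trans ?_ h2
      congr 1
    have hpos : 1 ≤ Fintype.card σ₂ := Fintype.card_pos_iff.mpr ⟨P₂.start⟩
    rw [hcard, hsub]
    omega
end

section
/- Catenation lower bound witness: let m, n ≥ 1 and, over the alphabet {a}, let L₁ = {a^{m-1}} and L₂ = {a^{n-1}}. Then L₁ and L₂ are suffix-free, NSC(L₁) = m, NSC(L₂) = n, and NSC(L₁·L₂) = m + n − 1. -/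
open Computability

/-- The singleton language `{a^{m-1}}` over the unary alphabet `{a}`
(encoded as `Fin 1`, with `a = 0`). -/
def unaryLang (m : ℕ) : Language (Fin 1) :=
  {w | w = List.replicate (m - 1) 0}

section Aux

open SNFA

variable {σ : Type}

lemma SNFA.stepSet_mono_s7 {α : Type} (M : SNFA α σ) {S T : Set σ} (h : S ⊆ T) (a : α) :
    M.stepSet S a ⊆ M.stepSet T a := by
  intro q hq
  simp only [SNFA.stepSet, Set.mem_iUnion] at hq ⊢
  obtain ⟨s, hs, hq⟩ := hq
  exact ⟨s, h hs, hq⟩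

lemma SNFA.evalFrom_mono_s7 {α : Type} (M : SNFA α σ) {S T : Set σ} (h : S ⊆ T) (w : List α) :
    M.evalFrom S w ⊆ M.evalFrom T w := by
  induction w generalizing S T with
  | nil => exact h
  | cons a w ih => exact ih (M.stepSet_mono_s7 h a)

lemma SNFA.evalFrom_append {α : Type} (M : SNFA α σ) (S : Set σ) (u v : List α) :
    M.evalFrom S (u ++ v) = M.evalFrom (M.evalFrom S u) v :=
  List.foldl_append

lemma SNFA.evalFrom_snoc {α : Type} (M : SNFA α σ) (S : Set σ) (u : List α) (a : α) :
    M.evalFrom S (u ++ [a]) = M.stepSet (M.evalFrom S u) a :=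
  M.evalFrom_append S u [a]

lemma SNFA.exists_run (M : SNFA (Fin 1) σ) :
    ∀ (t : ℕ) (q : σ), q ∈ M.evalFrom {M.start} (List.replicate t 0) →
      ∃ f : ℕ → σ, f 0 = M.start ∧ f t = q ∧ ∀ i < t, f (i + 1) ∈ M.step (f i) 0 := by
  intro t
  induction t with
  | zero =>
    intro q hq
    simp only [List.replicate, SNFA.evalFrom, List.foldl_nil, Set.mem_singleton_iff] at hq
    exact ⟨fun _ => q, hq.symm ▸ rfl, rfl, fun i hi => absurd hi (by omega)⟩
  | succ t ih =>
    intro q hq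
    rw [List.replicate_succ', M.evalFrom_snoc] at hq
    simp only [SNFA.stepSet, Set.mem_iUnion] at hq
    obtain ⟨p, hp, hq⟩ := hq
    obtain ⟨f, hf0, hft, hstep⟩ := ih p hp
    refine ⟨fun i => if i = t + 1 then q else f i, by simp [hf0], by simp, ?_⟩
    intro i hi
    by_cases h : i + 1 = t + 1
    · have : i = t := by omega
      simp [h, this, hft, hq]
    · have : i ≠ t + 1 := by omega
      simp [h, this, show i ≠ t by omega]
      exact hstep i (by omega)

lemma SNFA.run_eval (M : SNFA (Fin 1) σ) (f : ℕ → σ) (N : ℕ)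
    (hf : ∀ i < N, f (i + 1) ∈ M.step (f i) 0) :
    ∀ t s, t + s ≤ N → f (t + s) ∈ M.evalFrom {f t} (List.replicate s 0) := by
  intro t s
  induction s with
  | zero => intro _; simp [SNFA.evalFrom]
  | succ s ih =>
    intro h
    rw [List.replicate_succ', M.evalFrom_snoc]
    simp only [SNFA.stepSet, Set.mem_iUnion]
    exact ⟨f (t + s), ih (by omega), by
      have := hf (t + s) (by omega)
      simpa [Nat.add_assoc] using this⟩

lemma word_eq_replicate (w : List (Fin 1)) : w = List.replicate w.length 0 := by
  apply List.eq_replicate_of_mem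
  intro b _
  exact Subsingleton.elim _ _

lemma mem_unaryLang {w : List (Fin 1)} {k : ℕ} :
    w ∈ unaryLang k ↔ w = List.replicate (k - 1) 0 := Iff.rfl

lemma nscge_unary (k : ℕ) (hk : 1 ≤ k) : NSCge (unaryLang k) k := by
  intro σ _ M hM
  have hw : List.replicate (k - 1) (0 : Fin 1) ∈ M.accepts := by
    rw [hM]; exact rfl
  obtain ⟨q, hq, hql⟩ := hw
  obtain ⟨f, hf0, hfk, hstep⟩ := M.exists_run (k - 1) q hql
  have key : ∀ i j : ℕ, i ≤ j → j ≤ k - 1 → f i = f j → i = j := by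
    intro i j hij hjk hfij
    have h1 : f i ∈ M.evalFrom {M.start} (List.replicate i 0) := by
      have := M.run_eval f (k - 1) hstep 0 i (by omega)
      simpa [hf0] using this
    have h2 : f (k - 1) ∈ M.evalFrom {f i} (List.replicate (k - 1 - j) 0) := by
      have := M.run_eval f (k - 1) hstep j (k - 1 - j) (by omega)
      rw [hfij]
      have hjj : j + (k - 1 - j) = k - 1 := by omega
      rwa [hjj] at this
    have h3 : f (k - 1) ∈ M.evalFrom {M.start} (List.replicate (i + (k - 1 - j)) 0) := by
      rw [List.replicate_add, M.evalFrom_append]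
      exact M.evalFrom_mono_s7 (Set.singleton_subset_iff.2 h1) _ h2
    have h4 : List.replicate (i + (k - 1 - j)) (0 : Fin 1) ∈ M.accepts :=
      ⟨f (k - 1), hfk ▸ hq, h3⟩
    rw [hM, mem_unaryLang] at h4
    have := congrArg List.length h4
    simp only [List.length_replicate] at this
    omega
  have hinj : Function.Injective (fun i : Fin k => f i) := by
    intro i j hij
    rcases le_total (i : ℕ) (j : ℕ) with h | h
    · exact Fin.ext (key i j h (by omega) hij)
    · exact Fin.ext (key j i h (by omega) hij.symm).symm
  calc k = Fintype.card (Fin k) := (Fintype.card_fin k).symm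
    _ ≤ Fintype.card σ := Fintype.card_le_of_injective _ hinj

def unaryNFA (k : ℕ) (hk : 1 ≤ k) : SNFA (Fin 1) (Fin k) where
  step s _ := {j | (j : ℕ) = (s : ℕ) + 1}
  start := ⟨0, by omega⟩
  accept := {j | (j : ℕ) = k - 1}

lemma unaryNFA_eval (k : ℕ) (hk : 1 ≤ k) (t : ℕ) :
    (unaryNFA k hk).evalFrom {(unaryNFA k hk).start} (List.replicate t 0) =
      {j : Fin k | (j : ℕ) = t} := by
  induction t with
  | zero =>
    ext j
    simp [SNFA.evalFrom, unaryNFA, Fin.ext_iff, eq_comm]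
  | succ t ih =>
    rw [List.replicate_succ', SNFA.evalFrom_snoc, ih]
    ext j
    simp only [SNFA.stepSet, Set.mem_iUnion, Set.mem_setOf_eq]
    constructor
    · rintro ⟨s, hs, hj⟩
      simp only [unaryNFA, Set.mem_setOf_eq] at hj
      omega
    · intro hj
      have ht : t < k := by omega
      exact ⟨⟨t, ht⟩, by simp, by simp [unaryNFA, hj]⟩

lemma nscle_unary (k : ℕ) (hk : 1 ≤ k) : NSCle (unaryLang k) k := by
  refine ⟨Fin k, inferInstance, unaryNFA k hk, ?_, by simp⟩
  ext w
  rw [word_eq_replicate w]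
  constructor
  · rintro ⟨q, hq, hql⟩
    rw [unaryNFA_eval k hk] at hql
    simp only [unaryNFA, Set.mem_setOf_eq] at hq hql
    rw [mem_unaryLang]
    have : w.length = k - 1 := by omega
    rw [this]
  · intro h
    rw [mem_unaryLang] at h
    have hl : w.length = k - 1 := by
      have := congrArg List.length h
      simpa using this
    refine ⟨⟨k - 1, by omega⟩, by simp [unaryNFA], ?_⟩
    rw [unaryNFA_eval k hk, hl]
    simp

lemma nsceq_unary (k : ℕ) (hk : 1 ≤ k) : NSCeq (unaryLang k) k :=
  ⟨nscle_unary k hk, nscge_unary k hk⟩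

lemma suffixFree_unary (k : ℕ) : SuffixFree (unaryLang k) := by
  intro u v hu hv _
  rw [mem_unaryLang] at hu hv
  rw [hu, hv]

lemma unary_mul (m n : ℕ) (hm : 1 ≤ m) (hn : 1 ≤ n) :
    unaryLang m * unaryLang n = unaryLang (m + n - 1) := by
  ext w
  rw [Language.mem_mul, mem_unaryLang]
  constructor
  · rintro ⟨u, hu, v, hv, rfl⟩
    rw [mem_unaryLang] at hu hv
    rw [hu, hv, ← List.replicate_add]
    congr 1
    omega
  · intro h
    refine ⟨List.replicate (m - 1) 0, rfl, List.replicate (n - 1) 0, rfl, ?_⟩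
    rw [h, ← List.replicate_add]
    congr 1
    omega

end Aux

/-- **Catenation, lower bound witness.** For `m, n ≥ 1`, the languages
`L₁ = {a^{m-1}}` and `L₂ = {a^{n-1}}` over the unary alphabet `{a}` are
suffix-free, `NSC(L₁) = m`, `NSC(L₂) = n`, and `NSC(L₁ · L₂) = m + n - 1`. -/
theorem catenation_lower_witness (m n : ℕ) (hm : 1 ≤ m) (hn : 1 ≤ n) :
    SuffixFree (unaryLang m) ∧ SuffixFree (unaryLang n) ∧
    NSCeq (unaryLang m) m ∧ NSCeq (unaryLang n) n ∧
    NSCeq (unaryLang m * unaryLang n) (m + n - 1) := by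
  refine ⟨suffixFree_unary m, suffixFree_unary n, nsceq_unary m hm, nsceq_unary n hn, ?_⟩
  rw [unary_mul m n hm hn]
  exact nsceq_unary (m + n - 1) (by omega)
end
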